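/- Let {f_Z(· | ω)}_{ω ∈ Θ} be a family of probability density functions on ℝ, indexed measurably by ω = (w, ξ₁, ξ₂) ∈ Θ, such that each f_Z(· | ω) has its global mode at 0, i.e., f_Z(0 | ω) ≥ f_Z(y | ω) for all y ∈ ℝ and all ω ∈ Θ. Let p be a probability density on Θ. Let X be an n × p real matrix of full rank with p ≤ n and finite entries, with rows X₁ᵀ, …, X_nᵀ, and fix observations y₁, …, y_n ∈ ℝ. If ∫_Θ (f_Z(0 | ω))^{n−p} p(ω) dω < ∞, then ∫_Θ ∫_{ℝ^p} ∏_{i=1}^{n} f_Z(y_i − X_iᵀβ | ω) p(ω) dβ dω < ∞; that is, the posterior distribution of (β, ω) under the improper flat prior p(β) ∝ 1 on the regression coefficients β ∈ ℝ^p is proper. -/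

import Mathlib

open MeasureTheory

/-- Posterior propriety under a flat prior on the regression coefficients (Theorem 2). -/
theorem posterior_propriety_flat_prior_regression
    {Θ : Type*} [MeasurableSpace Θ] (ν : Measure Θ)
    (fZ : Θ → ℝ → ℝ) (p : Θ → ℝ)
    (hfZ_meas : Measurable (Function.uncurry fZ))
    (hfZ_nonneg : ∀ ω y, 0 ≤ fZ ω y)
    (hfZ_density : ∀ ω, ∫ y, fZ ω y = 1)
    (hmode : ∀ ω y, fZ ω y ≤ fZ ω 0)
    (hp_nonneg : ∀ ω, 0 ≤ p ω)
    (hp_density : ∫⁻ ω, ENNReal.ofReal (p ω) ∂ν = 1)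
    (n q : ℕ) (hqn : q ≤ n)
    (X : Matrix (Fin n) (Fin q) ℝ) (hrank : X.rank = q)
    (y : Fin n → ℝ)
    (hfin : ∫⁻ ω, ENNReal.ofReal ((fZ ω 0) ^ (n - q) * p ω) ∂ν < ⊤) :
    ∫⁻ ω, (∫⁻ β : Fin q → ℝ,
      ENNReal.ofReal ((∏ i, fZ ω (y i - ∑ j, X i j * β j)) * p ω)) ∂ν < ⊤ := by
  classical
  -- Step 1: extract `q` linearly independent rows of `X`.
  have hspan : Submodule.span ℝ (Set.range X) = ⊤ := by
    apply Submodule.eq_top_of_finrank_eq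
    have h1 := (Matrix.rank_eq_finrank_span_row X).symm
    rw [hrank, Matrix.row] at h1
    rw [h1, Module.finrank_fin_fun]
  obtain ⟨b, hbsub, hbspan, hbind⟩ := exists_linearIndependent ℝ (Set.range X)
  rw [hspan] at hbspan
  have hbfin : b.Finite := (Set.finite_range X).subset hbsub
  have hbfint : Fintype b := hbfin.fintype
  let B : Module.Basis b ℝ (Fin q → ℝ) := Module.Basis.mk hbind (by rw [Subtype.range_coe, hbspan])
  have hcard : Fintype.card b = q := by
    have := (Module.finrank_eq_card_basis B).symm
    rwa [Module.finrank_fin_fun] at this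
  let e : Fin q ≃ b := (Fintype.equivFinOfCardEq hcard).symm
  have hchoice : ∀ j : Fin q, ∃ i : Fin n, X i = (e j : Fin q → ℝ) := fun j => hbsub (e j).2
  let s : Fin q → Fin n := fun j => (hchoice j).choose
  have hs : ∀ j, X (s j) = (e j : Fin q → ℝ) := fun j => (hchoice j).choose_spec
  have hs_inj : Function.Injective s := by
    intro j₁ j₂ h
    apply e.injective
    apply Subtype.ext
    rw [← hs j₁, ← hs j₂, h]
  set M : Matrix (Fin q) (Fin q) ℝ := X.submatrix s id with hM
  have hrows : (fun j : Fin q => M j) = fun j => ((e j : Fin q → ℝ)) := by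
    funext j
    funext k
    simp [hM, Matrix.submatrix_apply, hs j]
  have hMind : LinearIndependent ℝ (fun j : Fin q => M j) := by
    rw [hrows]
    exact hbind.comp e e.injective
  have hMunit : IsUnit M := Matrix.linearIndependent_rows_iff_isUnit.mp hMind
  have hdet : M.det ≠ 0 := by
    have := (Matrix.isUnit_iff_isUnit_det M).mp hMunit
    exact isUnit_iff_ne_zero.mp this
  -- Step 2: the change of variables constant
  set d : ENNReal := ENNReal.ofReal |(M.det)⁻¹| with hd
  have hd_ne_top : d ≠ ⊤ := ENNReal.ofReal_ne_top
  set L : (Fin q → ℝ) →ₗ[ℝ] (Fin q → ℝ) := Matrix.toLin' M with hL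
  have hLmeas : Measurable L := (LinearMap.continuous_on_pi L).measurable
  have hmapL : Measure.map (⇑L) volume = d • volume := by
    have hdet' : LinearMap.det L ≠ 0 := by rw [hL, LinearMap.det_toLin']; exact hdet
    have := Real.map_linearMap_volume_pi_eq_smul_volume_pi hdet'
    rwa [hL, LinearMap.det_toLin'] at this
  set c : Fin q → ℝ := fun j => y (s j) with hc
  set φ : (Fin q → ℝ) → (Fin q → ℝ) := fun β => c - L β with hφ
  have hφmeas : Measurable φ := measurable_const.sub hLmeas
  have hmapφ : Measure.map φ volume = d • volume := by
    have : φ = (fun v => c - v) ∘ ⇑L := rfl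
    rw [this, ← Measure.map_map (show Measurable (fun v : Fin q → ℝ => c - v) from measurable_id.const_sub c) hLmeas, hmapL,
      Measure.map_smul, Measure.map_sub_left_eq_self volume c]
  -- Step 3 and 4, pointwise in ω
  have key : ∀ ω, (∫⁻ β : Fin q → ℝ,
      ENNReal.ofReal ((∏ i, fZ ω (y i - ∑ j, X i j * β j)) * p ω))
      ≤ ENNReal.ofReal ((fZ ω 0) ^ (n - q) * p ω) * d := by
    intro ω
    have hfmeas : Measurable (fZ ω) :=
      hfZ_meas.comp (measurable_const.prodMk measurable_id)
    have hint : Integrable (fZ ω) := by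
      by_contra h
      have h1 := hfZ_density ω
      rw [integral_undef h] at h1
      norm_num at h1
    -- the function of z
    set G : (Fin q → ℝ) → ENNReal := fun z => ENNReal.ofReal (∏ j, fZ ω (z j)) with hG
    have hGmeas : Measurable G := by
      apply Measurable.ennreal_ofReal
      apply Finset.measurable_prod
      intro j _
      exact hfmeas.comp (measurable_pi_apply j)
    have hGint : ∫⁻ z, G z = 1 := by
      have hFint : Integrable (fun z : Fin q → ℝ => ∏ j, fZ ω (z j)) :=
        Integrable.fin_nat_prod (fun _ => hint)
      have hFval : ∫ z : Fin q → ℝ, ∏ j, fZ ω (z j) = 1 := by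
        rw [volume_pi, integral_fintype_prod_eq_pow (ι := Fin q) (fZ ω), hfZ_density ω, one_pow]
      have h := ofReal_integral_eq_lintegral_ofReal hFint
        (Filter.Eventually.of_forall fun z => Finset.prod_nonneg fun j _ => hfZ_nonneg ω _)
      rw [hFval] at h
      rw [hG, ← h, ENNReal.ofReal_one]
    -- pointwise bound
    have hpt : ∀ β : Fin q → ℝ,
        ENNReal.ofReal ((∏ i, fZ ω (y i - ∑ j, X i j * β j)) * p ω)
        ≤ ENNReal.ofReal ((fZ ω 0) ^ (n - q) * p ω) * G (φ β) := by
      intro β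
      set g : Fin n → ℝ := fun i => fZ ω (y i - ∑ j, X i j * β j) with hg
      have hgnn : ∀ i, 0 ≤ g i := fun i => hfZ_nonneg ω _
      set T : Finset (Fin n) := Finset.image s Finset.univ with hT
      have hTcard : T.card = q := by
        rw [hT, Finset.card_image_of_injective _ hs_inj, Finset.card_univ, Fintype.card_fin]
      have hsplit : (∏ i, g i) = (∏ i ∈ Finset.univ \ T, g i) * (∏ i ∈ T, g i) :=
        (Finset.prod_sdiff (Finset.subset_univ T)).symm
      have hTprod : (∏ i ∈ T, g i) = ∏ j : Fin q, g (s j) := by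
        rw [hT, Finset.prod_image (fun a _ b _ h => hs_inj h)]
      have hφval : ∀ j : Fin q, φ β j = y (s j) - ∑ k, X (s j) k * β k := by
        intro j
        simp [hφ, hc, hL, Matrix.toLin'_apply, Matrix.mulVec, dotProduct, hM,
          Matrix.submatrix_apply]
      have hGφ : G (φ β) = ENNReal.ofReal (∏ j : Fin q, g (s j)) := by
        have h2 : ∀ j, fZ ω (φ β j) = g (s j) := fun j => by rw [hφval j]
        simp only [hG]
        rw [Finset.prod_congr rfl fun j _ => h2 j]
      have hbound : (∏ i ∈ Finset.univ \ T, g i) ≤ (fZ ω 0) ^ (n - q) := by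
        calc (∏ i ∈ Finset.univ \ T, g i) ≤ ∏ _i ∈ Finset.univ \ T, fZ ω 0 :=
              Finset.prod_le_prod (fun i _ => hgnn i) (fun i _ => hmode ω _)
          _ = (fZ ω 0) ^ (Finset.univ \ T).card := by rw [Finset.prod_const]
          _ = (fZ ω 0) ^ (n - q) := by
              rw [Finset.card_sdiff_of_subset (Finset.subset_univ T), Finset.card_univ,
                Fintype.card_fin, hTcard]
      have hineq : (∏ i, g i) * p ω ≤ ((fZ ω 0) ^ (n - q) * p ω) * (∏ j : Fin q, g (s j)) := by
        rw [hsplit, hTprod]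
        have h1 : (∏ i ∈ Finset.univ \ T, g i) * (∏ j : Fin q, g (s j)) * p ω
            ≤ (fZ ω 0) ^ (n - q) * (∏ j : Fin q, g (s j)) * p ω := by
          apply mul_le_mul_of_nonneg_right _ (hp_nonneg ω)
          exact mul_le_mul_of_nonneg_right hbound (Finset.prod_nonneg fun j _ => hgnn _)
        calc (∏ i ∈ Finset.univ \ T, g i) * (∏ j : Fin q, g (s j)) * p ω
            ≤ (fZ ω 0) ^ (n - q) * (∏ j : Fin q, g (s j)) * p ω := h1
          _ = ((fZ ω 0) ^ (n - q) * p ω) * (∏ j : Fin q, g (s j)) := by ring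
      calc ENNReal.ofReal ((∏ i, g i) * p ω)
          ≤ ENNReal.ofReal (((fZ ω 0) ^ (n - q) * p ω) * (∏ j : Fin q, g (s j))) :=
            ENNReal.ofReal_le_ofReal hineq
        _ = ENNReal.ofReal ((fZ ω 0) ^ (n - q) * p ω) * ENNReal.ofReal (∏ j : Fin q, g (s j)) :=
            ENNReal.ofReal_mul (mul_nonneg (pow_nonneg (hfZ_nonneg ω 0) _) (hp_nonneg ω))
        _ = ENNReal.ofReal ((fZ ω 0) ^ (n - q) * p ω) * G (φ β) := by rw [hGφ]
    calc (∫⁻ β : Fin q → ℝ, ENNReal.ofReal ((∏ i, fZ ω (y i - ∑ j, X i j * β j)) * p ω))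
        ≤ ∫⁻ β : Fin q → ℝ, ENNReal.ofReal ((fZ ω 0) ^ (n - q) * p ω) * G (φ β) :=
          lintegral_mono hpt
      _ = ENNReal.ofReal ((fZ ω 0) ^ (n - q) * p ω) * ∫⁻ β : Fin q → ℝ, G (φ β) :=
          lintegral_const_mul' _ _ ENNReal.ofReal_ne_top
      _ = ENNReal.ofReal ((fZ ω 0) ^ (n - q) * p ω) * d := by
          congr 1
          rw [← lintegral_map hGmeas hφmeas, hmapφ, lintegral_smul_measure, hGint, smul_eq_mul, mul_one]
  -- Step 5: conclude
  calc ∫⁻ ω, (∫⁻ β : Fin q → ℝ,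
        ENNReal.ofReal ((∏ i, fZ ω (y i - ∑ j, X i j * β j)) * p ω)) ∂ν
      ≤ ∫⁻ ω, ENNReal.ofReal ((fZ ω 0) ^ (n - q) * p ω) * d ∂ν := lintegral_mono key
    _ = (∫⁻ ω, ENNReal.ofReal ((fZ ω 0) ^ (n - q) * p ω) ∂ν) * d :=
        lintegral_mul_const' d _ hd_ne_top
    _ < ⊤ := ENNReal.mul_lt_top hfin hd_ne_top.lt_top
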